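/- If S, T : E → F are positive operators between Banach lattices with 0 ≤ S ≤ T and T is order M-weakly compact, then S is order M-weakly compact. -/

import Mathlib

open Filter Topology NormedSpace

open Filter Topology

section Defs

/-- A sequence in a lattice ordered group is pairwise disjoint. -/
def DisjSeq {G : Type*} [Lattice G] [AddCommGroup G] (y : ℕ → G) : Prop :=
  ∀ m n : ℕ, m ≠ n → |y m| ⊓ |y n| = 0

/-- The solid hull of a set. -/
def SolidHull {G : Type*} [Lattice G] [AddCommGroup G] (A : Set G) : Set G :=
  {z | ∃ a ∈ A, |z| ≤ |a|}

/-- A sequence is order bounded. -/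
def OrdBddSeq {G : Type*} [Preorder G] (y : ℕ → G) : Prop :=
  ∃ a b : G, ∀ n, a ≤ y n ∧ y n ≤ b

/-- A set is L-weakly compact: every disjoint sequence in its solid hull is norm null. -/
def LWCompactSet {G : Type*} [NormedAddCommGroup G] [Lattice G] (A : Set G) : Prop :=
  ∀ y : ℕ → G, (∀ n, y n ∈ SolidHull A) → DisjSeq y →
    Tendsto (fun n => ‖y n‖) atTop (𝓝 0)

/-- An operator is order L-weakly compact. -/
def OrderLWC {G H : Type*} [NormedAddCommGroup G] [Lattice G] [NormedSpace ℝ G]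
    [NormedAddCommGroup H] [Lattice H] [NormedSpace ℝ H] (T : G →L[ℝ] H) : Prop :=
  ∀ x : G, 0 ≤ x → LWCompactSet (T '' Set.Icc 0 x)

/-- An operator is L-weakly compact. -/
def LWC {X H : Type*} [NormedAddCommGroup X] [NormedSpace ℝ X]
    [NormedAddCommGroup H] [Lattice H] [NormedSpace ℝ H] (T : X →L[ℝ] H) : Prop :=
  LWCompactSet (T '' Metric.closedBall 0 1)

/-- An operator is M-weakly compact. -/
def MWC {G Y : Type*} [NormedAddCommGroup G] [Lattice G] [NormedSpace ℝ G]
    [NormedAddCommGroup Y] [NormedSpace ℝ Y] (T : G →L[ℝ] Y) : Prop :=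
  ∀ x : ℕ → G, (∃ C, ∀ n, ‖x n‖ ≤ C) → DisjSeq x →
    Tendsto (fun n => ‖T (x n)‖) atTop (𝓝 0)

/-- An operator is order M-weakly compact. -/
def OrderMWC {G H : Type*} [NormedAddCommGroup G] [Lattice G] [NormedSpace ℝ G]
    [NormedAddCommGroup H] [NormedSpace ℝ H] [Lattice (StrongDual ℝ H)]
    (T : G →L[ℝ] H) : Prop :=
  ∀ x : ℕ → G, (∀ n, ‖x n‖ ≤ 1) → DisjSeq x →
    ∀ f : ℕ → StrongDual ℝ H, OrdBddSeq f →
      Tendsto (fun n => f n (T (x n))) atTop (𝓝 0)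

/-- The norm is order continuous: every decreasing net with infimum `0` is norm null. -/
def OrderContinuousNorm (G : Type*) [NormedAddCommGroup G] [Lattice G] : Prop :=
  ∀ (ι : Type*) [Preorder ι] [Nonempty ι] [IsDirected ι (· ≤ ·)] (x : ι → G),
    Antitone x → IsGLB (Set.range x) 0 → Tendsto (fun i => ‖x i‖) atTop (𝓝 0)

/-- An operator between Banach lattices is order bounded. -/
def OrderBoundedOp {G H : Type*} [NormedAddCommGroup G] [Lattice G] [NormedSpace ℝ G]
    [NormedAddCommGroup H] [Lattice H] [NormedSpace ℝ H] (T : G →L[ℝ] H) : Prop :=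
  ∀ a b : G, ∃ c d : H, ∀ x : G, a ≤ x → x ≤ b → c ≤ T x ∧ T x ≤ d

/-- An operator into a Banach lattice is strong order bounded. -/
def StrongOrderBounded {X H : Type*} [NormedAddCommGroup X] [NormedSpace ℝ X]
    [NormedAddCommGroup H] [Lattice H] [NormedSpace ℝ H] (T : X →L[ℝ] H) : Prop :=
  ∃ a b : H, ∀ x : X, ‖x‖ ≤ 1 → a ≤ T x ∧ T x ≤ b

end Defs

theorem stmt7 {E F : Type*} [NormedAddCommGroup E] [Lattice E] [HasSolidNorm E] [IsOrderedAddMonoid E] [NormedSpace ℝ E] [CompleteSpace E]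
    [NormedAddCommGroup F] [Lattice F] [HasSolidNorm F] [IsOrderedAddMonoid F] [NormedSpace ℝ F] [CompleteSpace F]
    [Lattice (StrongDual ℝ F)] [HasSolidNorm (StrongDual ℝ F)]
    [CovariantClass (StrongDual ℝ F) (StrongDual ℝ F) (· + ·) (· ≤ ·)]
    (hF' : ∀ f : StrongDual ℝ F, 0 ≤ f ↔ ∀ y : F, 0 ≤ y → 0 ≤ f y)
    (S T : E →L[ℝ] F)
    (hS : ∀ x : E, 0 ≤ x → 0 ≤ S x)
    (hST : ∀ x : E, 0 ≤ x → S x ≤ T x)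
    (hT : OrderMWC T) :
    OrderMWC S := by
  intro x hx hdisj f hf
  obtain ⟨a, b, hab⟩ := hf
  -- pointwise bound: |f n (S (x n))| ≤ |f n| (T |x n|)
  have key : ∀ n, |f n (S (x n))| ≤ |f n| (T |x n|) := by
    intro n
    have habs_pos : (0 : StrongDual ℝ F) ≤ |f n| := abs_nonneg _
    have hsub : ∀ y : F, 0 ≤ y → |f n y| ≤ |f n| y := by
      intro y hy
      have h1 : (0 : StrongDual ℝ F) ≤ |f n| - f n := sub_nonneg.mpr (le_abs_self _)
      have h2 : (0 : StrongDual ℝ F) ≤ |f n| + f n := by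
        have := sub_nonneg.mpr (neg_le_abs (f n))
        simpa [sub_neg_eq_add, add_comm] using this
      have h1' := (hF' _).mp h1 y hy
      have h2' := (hF' _).mp h2 y hy
      simp only [ContinuousLinearMap.sub_apply, ContinuousLinearMap.add_apply] at h1' h2'
      rw [abs_le]
      constructor <;> linarith
    have hxpos : (0 : E) ≤ (x n)⁺ := le_sup_right
    have hxneg : (0 : E) ≤ (x n)⁻ := le_sup_right
    have hdecomp : S (x n) = S ((x n)⁺) - S ((x n)⁻) := by
      rw [← map_sub]; congr 1; exact (posPart_sub_negPart (x n)).symm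
    have hsum : S ((x n)⁺) + S ((x n)⁻) = S |x n| := by
      rw [← map_add]; congr 1; exact posPart_add_negPart (x n)
    have h3 : |f n (S (x n))| ≤ |f n| (S |x n|) := by
      calc |f n (S (x n))| = |f n (S ((x n)⁺)) - f n (S ((x n)⁻))| := by
            rw [hdecomp, map_sub]
        _ ≤ |f n (S ((x n)⁺))| + |f n (S ((x n)⁻))| := abs_sub _ _
        _ ≤ |f n| (S ((x n)⁺)) + |f n| (S ((x n)⁻)) :=
            add_le_add (hsub _ (hS _ hxpos)) (hsub _ (hS _ hxneg))
        _ = |f n| (S |x n|) := by rw [← map_add, hsum]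
    have h4 : |f n| (S |x n|) ≤ |f n| (T |x n|) := by
      have hle : S |x n| ≤ T |x n| := hST _ (abs_nonneg _)
      have := (hF' _).mp habs_pos _ (sub_nonneg.mpr hle)
      simp only [map_sub] at this
      linarith
    exact h3.trans h4
  -- apply hT to |x ·| and |f ·|
  have hT' : Tendsto (fun n => |f n| (T |x n|)) atTop (𝓝 0) := by
    refine hT (fun n => |x n|) (fun n => ?_) ?_ (fun n => |f n|) ?_
    · rw [norm_abs_eq_norm]; exact hx n
    · intro m n hmn
      simpa [abs_abs] using hdisj m n hmn
    · refine ⟨0, |a| + |b|, fun n => ⟨abs_nonneg _, ?_⟩⟩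
      have h1 : f n ≤ |a| + |b| := (hab n).2.trans ((le_abs_self b).trans (le_add_of_nonneg_left (abs_nonneg a)))
      have h2 : -f n ≤ |a| + |b| := by
        have h2a : -f n ≤ -a := by
          have h := add_le_add_right (hab n).1 (-a - f n)
          have e1 : -a - f n + a = -f n + (-a + a) := by abel
          have e2 : -a - f n + f n = -a + (-f n + f n) := by abel
          rw [e1, e2] at h; simpa using h
        have h2b : -a ≤ |a| := neg_le_abs a
        have h2c : |a| ≤ |a| + |b| := le_add_of_nonneg_right (abs_nonneg b)
        exact (h2a.trans h2b).trans h2c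
      exact abs_le'.mpr ⟨h1, h2⟩
  refine squeeze_zero_norm (fun n => ?_) hT'
  simpa [Real.norm_eq_abs] using key n
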